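/- Let (hₙ) be a sequence of positive reals with hₙ → 0 and n·hₙ → ∞. Then √n · hₙ · P( u₀ − max_{1 ≤ i ≤ n} Xᵢ > hₙ ) → 0 as n → ∞; that is, P(|X₍ₙ₎ − u₀| > hₙ) = o((√n·hₙ)^{−1}), the tail bound used to justify replacing the boundary-kernel estimating equation by its version at the true boundary. -/

import Mathlib

open MeasureTheory Filter Topology ProbabilityTheory

/-- Tail bound for the sample maximum at bandwidth scale: for i.i.d.
`X₁, X₂, …` with c.d.f. `F` satisfying `F(u₀) = 1` and having left derivative
`c > 0` at `u₀`, and bandwidths `hₙ > 0` with `hₙ → 0` and `n hₙ → ∞`,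
`P(u₀ − max_{1 ≤ i ≤ n} Xᵢ > hₙ) = o((√n hₙ)^{−1})`, i.e.
`√n hₙ P(u₀ − max_{1 ≤ i ≤ n} Xᵢ > hₙ) → 0`. -/
theorem sample_max_tail_bound
    {Ω : Type*} [MeasurableSpace Ω] (μ : Measure Ω) [IsProbabilityMeasure μ]
    (X : ℕ → Ω → ℝ) (hXmeas : ∀ i, Measurable (X i))
    (hindep : iIndepFun X μ)
    (hident : ∀ i, Measure.map (X i) μ = Measure.map (X 0) μ)
    (F : ℝ → ℝ) (hF : ∀ t, F t = (μ {ω | X 0 ω ≤ t}).toReal)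
    (u₀ c : ℝ) (hF1 : F u₀ = 1) (hc : 0 < c)
    (hderiv : Tendsto (fun s => (F u₀ - F (u₀ - s)) / s)
      (nhdsWithin 0 (Set.Ioi 0)) (nhds c))
    (h : ℕ → ℝ) (hpos : ∀ n, 0 < h n)
    (hto0 : Tendsto h atTop (nhds 0))
    (hnh : Tendsto (fun n : ℕ => (n : ℝ) * h n) atTop atTop) :
    Tendsto
      (fun n : ℕ => Real.sqrt n * h n *
        (μ {ω | ∀ i < n, X i ω < u₀ - h n}).toReal)
      atTop (nhds 0) := by
  set p : ℕ → ℝ := fun n => (μ {ω | X 0 ω < u₀ - h n}).toReal with hp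
  -- Step 1 : rewrite the probability as a power
  have hprod : ∀ n, (μ {ω | ∀ i < n, X i ω < u₀ - h n}).toReal = p n ^ n := by
    intro n
    have hset : {ω | ∀ i < n, X i ω < u₀ - h n}
        = ⋂ i ∈ Finset.range n, X i ⁻¹' Set.Iio (u₀ - h n) := by
      ext ω; simp [Set.mem_iInter]
    have hmeas : ∀ i ∈ Finset.range n,
        MeasurableSet[MeasurableSpace.comap (X i) inferInstance]
          (X i ⁻¹' Set.Iio (u₀ - h n)) :=
      fun i _ => ⟨Set.Iio (u₀ - h n), measurableSet_Iio, rfl⟩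
    have hid : ∀ i, μ (X i ⁻¹' Set.Iio (u₀ - h n))
        = μ (X 0 ⁻¹' Set.Iio (u₀ - h n)) := by
      intro i
      rw [← Measure.map_apply (hXmeas i) measurableSet_Iio, hident i,
        Measure.map_apply (hXmeas 0) measurableSet_Iio]
    rw [hset, hindep.meas_biInter hmeas]
    simp only [hid]
    rw [Finset.prod_const, Finset.card_range, ENNReal.toReal_pow]
    rfl
  have hp_nonneg : ∀ n, 0 ≤ p n := fun n => ENNReal.toReal_nonneg
  -- Step 2 : p n ≤ F (u₀ - h n)
  have hp_le : ∀ n, p n ≤ F (u₀ - h n) := by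
    intro n
    rw [hF]
    exact ENNReal.toReal_mono (measure_ne_top μ _)
      (measure_mono (Set.setOf_subset_setOf.mpr fun ω hω => hω.le))
  -- Step 3 : eventually F (u₀ - h n) ≤ 1 - c/2 * h n
  have hlim : Tendsto (fun n => (F u₀ - F (u₀ - h n)) / h n) atTop (nhds c) := by
    apply hderiv.comp
    exact tendsto_nhdsWithin_of_tendsto_nhds_of_eventually_within _ hto0
      (Eventually.of_forall fun n => hpos n)
  have hev : ∀ᶠ n in atTop, p n ≤ Real.exp (-(c / 2 * h n)) := by
    filter_upwards [hlim.eventually (eventually_gt_nhds (by linarith : c / 2 < c))]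
      with n hn
    have h1 : c / 2 * h n < F u₀ - F (u₀ - h n) := (lt_div_iff₀ (hpos n)).mp hn
    have h2 : p n ≤ 1 - c / 2 * h n := by
      have := hp_le n; linarith [hF1 ▸ h1]
    have h3 : 1 - c / 2 * h n ≤ Real.exp (-(c / 2 * h n)) := by
      have := Real.add_one_le_exp (-(c / 2 * h n)); linarith
    linarith
  -- Step 4 : squeeze
  have hkey : Tendsto
      (fun n : ℕ => (n : ℝ) * h n * Real.exp (-(c / 2 * ((n : ℝ) * h n))))
      atTop (nhds 0) := by
    have hs : Tendsto (fun n : ℕ => c / 2 * ((n : ℝ) * h n)) atTop atTop :=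
      hnh.const_mul_atTop (by positivity)
    have hbase : Tendsto (fun s : ℝ => s * Real.exp (-s)) atTop (nhds 0) := by
      have := Real.tendsto_pow_mul_exp_neg_atTop_nhds_zero 1
      simpa using this
    have := (hbase.comp hs).const_mul (2 / c)
    simp only [Function.comp] at this
    have heq : (fun n : ℕ => 2 / c * (c / 2 * ((n : ℝ) * h n) *
        Real.exp (-(c / 2 * ((n : ℝ) * h n)))))
        = fun n : ℕ => (n : ℝ) * h n * Real.exp (-(c / 2 * ((n : ℝ) * h n))) := by
      funext n
      field_simp
    rw [heq] at this
    simpa using this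
  apply squeeze_zero' ?_ ?_ hkey
  · filter_upwards with n
    exact mul_nonneg (mul_nonneg (Real.sqrt_nonneg _) (hpos n).le)
      ENNReal.toReal_nonneg
  · filter_upwards [hev, eventually_ge_atTop 1] with n hn hn1
    rw [hprod n]
    have h1 : (1 : ℝ) ≤ (n : ℝ) := by exact_mod_cast hn1
    have hsq : Real.sqrt n ≤ (n : ℝ) := by
      calc Real.sqrt n ≤ Real.sqrt ((n : ℝ) ^ 2) := Real.sqrt_le_sqrt (by nlinarith)
        _ = (n : ℝ) := Real.sqrt_sq (by linarith)
    calc Real.sqrt n * h n * p n ^ n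
        ≤ (n : ℝ) * h n * Real.exp (-(c / 2 * h n)) ^ n := by
          apply mul_le_mul
          · exact mul_le_mul_of_nonneg_right hsq (hpos n).le
          · exact pow_le_pow_left₀ (hp_nonneg n) hn n
          · exact pow_nonneg (hp_nonneg n) n
          · exact mul_nonneg (by positivity) (hpos n).le
        _ = (n : ℝ) * h n * Real.exp (-(c / 2 * ((n : ℝ) * h n))) := by
          rw [← Real.exp_nat_mul]; ring_nf
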